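/- arXiv:1311.6413 — 3 statements merged into one kernel-verified Lean document; each statement's English description precedes it below -/
import Mathlib

section
/- The function u(x,t) = -√c · tanh(√c(x - ct)) satisfies the foam drainage equation u_t + 2u²u_x - (u_x)² - (1/2)u·u_xx = 0 for all real x, t, where c > 0. -/
open Real

lemma my_hasDerivAt_tanh (x : ℝ) :
    HasDerivAt Real.tanh (1 / Real.cosh x ^ 2) x := by
  have h := (Real.hasDerivAt_sinh x).div (Real.hasDerivAt_cosh x)
      (ne_of_gt (Real.cosh_pos x))
  have hfun : Real.tanh = fun y => Real.sinh y / Real.cosh y := by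
    funext y; exact Real.tanh_eq_sinh_div_cosh y
  rw [hfun]
  refine h.congr_deriv ?_
  have := Real.cosh_sq_sub_sinh_sq x
  field_simp
  nlinarith [this]

theorem foam_drainage_tanh_solution (c : ℝ) (hc : 0 < c) (x t : ℝ) :
    (fun u : ℝ → ℝ → ℝ =>
      deriv (fun s => u x s) t
        + 2 * (u x t) ^ 2 * deriv (fun y => u y t) x
        - (deriv (fun y => u y t) x) ^ 2
        - (1 / 2) * u x t * deriv (fun y => deriv (fun z => u z t) y) x = 0)
      (fun x t => -Real.sqrt c * Real.tanh (Real.sqrt c * (x - c * t))) := by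
  simp only
  set a := Real.sqrt c with ha
  have ha2 : a ^ 2 = c := Real.sq_sqrt hc.le
  set p := a * (x - c * t) with hp
  -- time derivative
  have hint : HasDerivAt (fun s : ℝ => a * (x - c * s)) (a * -(c * 1)) t :=
    (((hasDerivAt_id t).const_mul c).const_sub x).const_mul a
  have hT : HasDerivAt (fun s : ℝ => -a * Real.tanh (a * (x - c * s)))
      (-a * (1 / Real.cosh p ^ 2 * (a * -(c * 1)))) t :=
    (((my_hasDerivAt_tanh p).comp t hint)).const_mul (-a)
  -- space derivative at any point y
  have hX : ∀ y : ℝ, HasDerivAt (fun z : ℝ => -a * Real.tanh (a * (z - c * t)))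
      (-a * (1 / Real.cosh (a * (y - c * t)) ^ 2 * (a * 1))) y := by
    intro y
    have hinx : HasDerivAt (fun z : ℝ => a * (z - c * t)) (a * 1) y :=
      ((hasDerivAt_id y).sub_const (c * t)).const_mul a
    exact ((my_hasDerivAt_tanh (a * (y - c * t))).comp y hinx).const_mul (-a)
  -- first derivative function equality
  have hfirst : (fun y : ℝ => deriv (fun z : ℝ => -a * Real.tanh (a * (z - c * t))) y)
      = fun y : ℝ => (-a * a) * ((Real.cosh (a * (y - c * t)) ^ 2)⁻¹) := by
    funext y
    rw [(hX y).deriv]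
    ring
  -- second derivative
  have hinx : HasDerivAt (fun z : ℝ => a * (z - c * t)) (a * 1) x :=
    ((hasDerivAt_id x).sub_const (c * t)).const_mul a
  have hcosh2 : HasDerivAt (fun y : ℝ => Real.cosh (a * (y - c * t)) ^ 2)
      (2 * Real.cosh p ^ 1 * (Real.sinh p * (a * 1))) x := by
    have := ((Real.hasDerivAt_cosh p).comp x hinx).pow 2
    refine this.congr_deriv ?_
    simp [hp]
  have hCne : Real.cosh p ^ 2 ≠ 0 := pow_ne_zero 2 (ne_of_gt (Real.cosh_pos p))
  have hinv : HasDerivAt (fun y : ℝ => (Real.cosh (a * (y - c * t)) ^ 2)⁻¹)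
      (-(2 * Real.cosh p ^ 1 * (Real.sinh p * (a * 1))) / (Real.cosh p ^ 2) ^ 2) x :=
    hcosh2.inv hCne
  have hsec : HasDerivAt (fun y : ℝ => (-a * a) * ((Real.cosh (a * (y - c * t)) ^ 2)⁻¹))
      ((-a * a) * (-(2 * Real.cosh p ^ 1 * (Real.sinh p * (a * 1))) / (Real.cosh p ^ 2) ^ 2)) x :=
    hinv.const_mul (-a * a)
  rw [hT.deriv, (hX x).deriv, hfirst, hsec.deriv]
  have hC : Real.cosh p ≠ 0 := ne_of_gt (Real.cosh_pos p)
  have hid : Real.cosh p ^ 2 - Real.sinh p ^ 2 = 1 := Real.cosh_sq_sub_sinh_sq p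
  have htanh : Real.tanh p = Real.sinh p / Real.cosh p := Real.tanh_eq_sinh_div_cosh p
  rw [htanh, ← hp, ← ha2]
  field_simp
  linear_combination (a ^ 4) * hid
end

section
/- The function u(x,t) = -1/2 + 1/(1 + e^{x - t/4}) satisfies the foam drainage equation u_t + 2u²u_x - (u_x)² - (1/2)u·u_xx = 0 for all real x, t. -/
open Real

lemma one_add_exp_ne (a : ℝ) : 1 + Real.exp a ≠ 0 := by positivity

lemma deriv_x (t y : ℝ) :
    HasDerivAt (fun z : ℝ => -(1 / 2) + 1 / (1 + Real.exp (z - t / 4)))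
      (-(Real.exp (y - t / 4) / (1 + Real.exp (y - t / 4)) ^ 2)) y := by
  have h1 : HasDerivAt (fun z : ℝ => z - t / 4) 1 y := by
    simpa using (hasDerivAt_id y).sub_const (t / 4)
  have h2 : HasDerivAt (fun z : ℝ => Real.exp (z - t / 4)) (Real.exp (y - t / 4)) y := by
    simpa [Function.comp_def] using (Real.hasDerivAt_exp (y - t / 4)).comp y h1
  have h3 : HasDerivAt (fun z : ℝ => 1 + Real.exp (z - t / 4)) (Real.exp (y - t / 4)) y :=
    h2.const_add 1
  have h4 := (h3.inv (one_add_exp_ne _)).const_add (-(1 / 2) : ℝ)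
  simpa [one_div, neg_div] using h4

lemma deriv_t (x t : ℝ) :
    HasDerivAt (fun s : ℝ => -(1 / 2) + 1 / (1 + Real.exp (x - s / 4)))
      (Real.exp (x - t / 4) / (4 * (1 + Real.exp (x - t / 4)) ^ 2)) t := by
  have h1 : HasDerivAt (fun s : ℝ => x - s / 4) (-(1 / 4)) t := by
    simpa using (hasDerivAt_const t x).fun_sub ((hasDerivAt_id t).div_const 4)
  have h2 : HasDerivAt (fun s : ℝ => Real.exp (x - s / 4))
      (Real.exp (x - t / 4) * (-(1 / 4))) t :=
    h1.exp
  have h3 : HasDerivAt (fun s : ℝ => 1 + Real.exp (x - s / 4))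
      (Real.exp (x - t / 4) * (-(1 / 4))) t := h2.const_add 1
  have h4 := (h3.inv (one_add_exp_ne _)).const_add (-(1 / 2) : ℝ)
  have : -(Real.exp (x - t / 4) * (-(1 / 4))) / (1 + Real.exp (x - t / 4)) ^ 2
      = Real.exp (x - t / 4) / (4 * (1 + Real.exp (x - t / 4)) ^ 2) := by
    have hne := one_add_exp_ne (x - t / 4)
    field_simp
  rw [← this]
  simpa [one_div] using h4

lemma deriv_xx (t y : ℝ) :
    HasDerivAt (fun z : ℝ => -(Real.exp (z - t / 4) / (1 + Real.exp (z - t / 4)) ^ 2))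
      (-(Real.exp (y - t / 4) * (1 - Real.exp (y - t / 4)) / (1 + Real.exp (y - t / 4)) ^ 3)) y := by
  have h1 : HasDerivAt (fun z : ℝ => z - t / 4) 1 y := by
    simpa using (hasDerivAt_id y).sub_const (t / 4)
  have h2 : HasDerivAt (fun z : ℝ => Real.exp (z - t / 4)) (Real.exp (y - t / 4)) y := by
    simpa [Function.comp_def] using (Real.hasDerivAt_exp (y - t / 4)).comp y h1
  have h3 : HasDerivAt (fun z : ℝ => 1 + Real.exp (z - t / 4)) (Real.exp (y - t / 4)) y :=
    h2.const_add 1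
  have hden : HasDerivAt (fun z : ℝ => (1 + Real.exp (z - t / 4)) ^ 2)
      (2 * (1 + Real.exp (y - t / 4)) * Real.exp (y - t / 4)) y := by
    have := h3.fun_pow 2
    simpa [mul_comm, mul_assoc, mul_left_comm] using this
  have hpow : ((1 + Real.exp (y - t / 4)) ^ 2 : ℝ) ≠ 0 := by positivity
  have h4 := (h2.div hden hpow).neg
  have : -((Real.exp (y - t / 4) * (1 + Real.exp (y - t / 4)) ^ 2 -
        Real.exp (y - t / 4) * (2 * (1 + Real.exp (y - t / 4)) * Real.exp (y - t / 4))) /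
        ((1 + Real.exp (y - t / 4)) ^ 2) ^ 2)
      = -(Real.exp (y - t / 4) * (1 - Real.exp (y - t / 4)) / (1 + Real.exp (y - t / 4)) ^ 3) := by
    have hne := one_add_exp_ne (y - t / 4)
    field_simp
    ring
  rw [← this]
  exact h4

theorem foam_drainage_exp_solution (x t : ℝ) :
    (fun u : ℝ → ℝ → ℝ =>
      deriv (fun s => u x s) t
        + 2 * (u x t) ^ 2 * deriv (fun y => u y t) x
        - (deriv (fun y => u y t) x) ^ 2
        - (1 / 2) * u x t * deriv (fun y => deriv (fun z => u z t) y) x = 0)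
      (fun x t => -(1 / 2) + 1 / (1 + Real.exp (x - t / 4))) := by
  simp only
  have ht := (deriv_t x t).deriv
  have hx1 := (deriv_x t x).deriv
  have hxx : deriv (fun y => deriv (fun z : ℝ => -(1 / 2) + 1 / (1 + Real.exp (z - t / 4))) y) x
      = -(Real.exp (x - t / 4) * (1 - Real.exp (x - t / 4)) / (1 + Real.exp (x - t / 4)) ^ 3) := by
    have : (fun y => deriv (fun z : ℝ => -(1 / 2) + 1 / (1 + Real.exp (z - t / 4))) y)
        = fun y : ℝ => -(Real.exp (y - t / 4) / (1 + Real.exp (y - t / 4)) ^ 2) := by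
      funext y
      exact (deriv_x t y).deriv
    rw [this]
    exact (deriv_xx t x).deriv
  rw [ht, hx1, hxx]
  have hne := one_add_exp_ne (x - t / 4)
  field_simp
  ring
end

section
/- For c > 0, if A(x,t) = c·tanh²(√c(x - ct)), then A satisfies A_t + ∂ₓ(A² - (√A/2)·A_x) = 0 for all x, t with x < ct. -/
open Real

private lemma tanh_hasDerivAt (x : ℝ) :
    HasDerivAt Real.tanh (1 - Real.tanh x ^ 2) x := by
  have h := (Real.hasDerivAt_sinh x).div (Real.hasDerivAt_cosh x) (Real.cosh_pos x).ne'
  rw [show (Real.sinh / Real.cosh : ℝ → ℝ) = Real.tanh from funext fun y => (Real.tanh_eq_sinh_div_cosh y).symm] at h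
  refine h.congr_deriv ?_
  have hc := (Real.cosh_pos x).ne'
  have key : Real.cosh x ^ 2 - Real.sinh x ^ 2 = 1 := Real.cosh_sq_sub_sinh_sq x
  rw [Real.tanh_eq_sinh_div_cosh]
  field_simp

private lemma space_hasDerivAt (c t y : ℝ) :
    HasDerivAt (fun z : ℝ => c * Real.tanh (Real.sqrt c * (z - c * t)) ^ 2)
      (2 * c * Real.sqrt c * Real.tanh (Real.sqrt c * (y - c * t))
        * (1 - Real.tanh (Real.sqrt c * (y - c * t)) ^ 2)) y := by
  have hin : HasDerivAt (fun z : ℝ => Real.sqrt c * (z - c * t)) (Real.sqrt c) y := by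
    simpa using ((hasDerivAt_id y).sub_const (c * t)).const_mul (Real.sqrt c)
  have h1 := (tanh_hasDerivAt (Real.sqrt c * (y - c * t))).comp y hin
  have h2 := (h1.pow 2).const_mul c
  simp only [Function.comp, Pi.pow_apply] at h2
  refine h2.congr_deriv ?_
  ring

theorem foam_drainage_A_solution (c : ℝ) (hc : 0 < c) :
    ∀ x t : ℝ, x < c * t →
      (fun A : ℝ → ℝ → ℝ =>
        deriv (fun s => A x s) t
          + deriv (fun y => (A y t) ^ 2
              - Real.sqrt (A y t) / 2 * deriv (fun z => A z t) y) x = 0)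
        (fun x t => c * Real.tanh (Real.sqrt c * (x - c * t)) ^ 2) := by
  intro x t hxt
  simp only
  set T : ℝ → ℝ := fun y => Real.tanh (Real.sqrt c * (y - c * t)) with hT
  -- time derivative
  have hin : HasDerivAt (fun s : ℝ => Real.sqrt c * (x - c * s)) (Real.sqrt c * (-c)) t := by
    have : HasDerivAt (fun s : ℝ => x - c * s) (-c) t := by
      simpa using ((hasDerivAt_id t).const_mul c).const_sub x
    simpa using this.const_mul (Real.sqrt c)
  have htime : HasDerivAt (fun s : ℝ => c * Real.tanh (Real.sqrt c * (x - c * s)) ^ 2)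
      (-(2 * c * c * Real.sqrt c * T x * (1 - T x ^ 2))) t := by
    have h1 := (tanh_hasDerivAt (Real.sqrt c * (x - c * t))).comp t hin
    have h2 := (h1.pow 2).const_mul c
    simp only [Function.comp, Pi.pow_apply] at h2
    refine h2.congr_deriv ?_
    simp only [hT]
    ring
  rw [htime.deriv]
  -- rewrite the deriv inside the flux
  have hderiv : (fun y : ℝ => deriv (fun z : ℝ => c * Real.tanh (Real.sqrt c * (z - c * t)) ^ 2) y)
      = fun y : ℝ => 2 * c * Real.sqrt c * T y * (1 - T y ^ 2) := by
    funext y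
    exact (space_hasDerivAt c t y).deriv
  -- flux equals G eventually near x
  have hsc : Real.sqrt c * Real.sqrt c = c := Real.mul_self_sqrt hc.le
  have hflux : (fun y : ℝ => (c * T y ^ 2) ^ 2
        - Real.sqrt (c * T y ^ 2) / 2
          * deriv (fun z : ℝ => c * Real.tanh (Real.sqrt c * (z - c * t)) ^ 2) y)
      =ᶠ[nhds x] fun y : ℝ => c ^ 2 * T y ^ 2 := by
    have hopen : {y : ℝ | y < c * t} ∈ nhds x := isOpen_Iio.mem_nhds hxt
    filter_upwards [hopen] with y hy
    have hu : Real.sqrt c * (y - c * t) < 0 :=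
      mul_neg_of_pos_of_neg (Real.sqrt_pos.mpr hc) (by linarith)
    have hTy : T y ≤ 0 := by
      simp only [hT, Real.tanh_eq_sinh_div_cosh]
      exact div_nonpos_of_nonpos_of_nonneg (Real.sinh_nonpos_iff.mpr hu.le)
        (Real.cosh_pos _).le
    have hsqrt : Real.sqrt (c * T y ^ 2) = Real.sqrt c * (-(T y)) := by
      rw [Real.sqrt_mul hc.le, Real.sqrt_sq_eq_abs, abs_of_nonpos hTy]
    rw [show deriv (fun z : ℝ => c * Real.tanh (Real.sqrt c * (z - c * t)) ^ 2) y
        = 2 * c * Real.sqrt c * T y * (1 - T y ^ 2) from by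
          rw [hT]; exact (space_hasDerivAt c t y).deriv, hsqrt]
    linear_combination c * T y ^ 2 * (1 - T y ^ 2) * hsc
  rw [hflux.deriv_eq]
  -- derivative of G
  have hG : HasDerivAt (fun y : ℝ => c ^ 2 * T y ^ 2)
      (2 * c * c * Real.sqrt c * T x * (1 - T x ^ 2)) x := by
    have hin2 : HasDerivAt (fun z : ℝ => Real.sqrt c * (z - c * t)) (Real.sqrt c) x := by
      simpa using ((hasDerivAt_id x).sub_const (c * t)).const_mul (Real.sqrt c)
    have h1 := (tanh_hasDerivAt (Real.sqrt c * (x - c * t))).comp x hin2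
    have h2 := (h1.pow 2).const_mul (c ^ 2)
    simp only [Function.comp, Pi.pow_apply] at h2
    refine h2.congr_deriv ?_
    simp only [hT]
    ring
  rw [hG.deriv]
  ring
end
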